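/- Let n = 2k+1 be odd and let A be an n×n matrix with entries in {0,1,−1} all of whose row and column sums equal 1 (a semi-ASM). Then there exists an n×n (0,±1)-matrix B with all entries nonzero and all row and column sums equal to 1 that agrees with A in every position where A is nonzero. -/

import Mathlib

open Finset

/-- A line (vector) of integers is "alternating" in the ASM sense:
all prefix sums are 0 or 1, and the total sum is 1. This is equivalent to the
nonzero entries being ±1, alternating in sign, beginning and ending with +1. -/
def AltLine {n : ℕ} (v : Fin n → ℤ) : Prop :=
  (∀ t : Fin n, (∑ s ∈ Finset.univ.filter (fun s => s ≤ t), v s) = 0 ∨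
      (∑ s ∈ Finset.univ.filter (fun s => s ≤ t), v s) = 1) ∧
  (∑ s, v s) = 1

/-- Alternating sign matrix. -/
def IsAsm {n : ℕ} (A : Matrix (Fin n) (Fin n) ℤ) : Prop :=
  (∀ i, AltLine (fun j => A i j)) ∧ (∀ j, AltLine (fun i => A i j))

/-- Alternating sign hypermatrix: every line in each of the three directions alternates. -/
def IsAshm {n : ℕ} (A : Fin n → Fin n → Fin n → ℤ) : Prop :=
  (∀ j k, AltLine (fun i => A i j k)) ∧
  (∀ i k, AltLine (fun j => A i j k)) ∧
  (∀ i j, AltLine (fun k => A i j k))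

/-- The ASHM-Latin square `L(A) = 1·A₁ + 2·A₂ + ⋯ + n·Aₙ` (planes indexed from 1). -/
def Lmat {n : ℕ} (A : Fin n → Fin n → Fin n → ℤ) (i j : Fin n) : ℤ :=
  ∑ k : Fin n, ((k.1 : ℤ) + 1) * A i j k

section helpers

lemma evenline {n : ℕ} (hn : Odd n) (v : Fin n → ℤ)
    (hv : ∀ j, v j = -1 ∨ v j = 0 ∨ v j = 1) (hs : (∑ j, v j) = 1) :
    Even (Finset.univ.filter (fun j => v j = 0)).card := by
  classical
  set c := (Finset.univ.filter (fun j => ¬ v j = 0)).card with hc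
  have h1 : (∑ j, v j ^ 2) = (c : ℤ) := by
    rw [hc]
    rw [← Finset.sum_filter_add_sum_filter_not Finset.univ (fun j => ¬ v j = 0) (fun j => v j ^ 2)]
    have e1 : ∑ j ∈ Finset.univ.filter (fun j => ¬ v j = 0), v j ^ 2
        = ∑ j ∈ Finset.univ.filter (fun j => ¬ v j = 0), (1 : ℤ) := by
      apply Finset.sum_congr rfl
      intro j hj
      have := (Finset.mem_filter.mp hj).2
      rcases hv j with h | h | h <;> simp [h] at this ⊢
    have e2 : ∑ j ∈ Finset.univ.filter (fun j => ¬ ¬ v j = 0), v j ^ 2 = 0 := by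
      apply Finset.sum_eq_zero
      intro j hj
      have := (Finset.mem_filter.mp hj).2
      simp only [not_not] at this
      simp [this]
    rw [e1, e2, Finset.sum_const]
    simp
  have h2 : (∑ j, v j ^ 2) % 2 = (∑ j, v j) % 2 := by
    rw [Finset.sum_int_mod, Finset.sum_int_mod Finset.univ 2 v]
    congr 1
    apply Finset.sum_congr rfl
    intro j _
    rcases hv j with h | h | h <;> norm_num [h]
  rw [h1, hs] at h2
  have hcodd : c % 2 = 1 := by omega
  have hsplit : (Finset.univ.filter (fun j => v j = 0)).card + c = n := by
    rw [hc]
    rw [Finset.card_filter_add_card_filter_not]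
    exact Finset.card_univ.trans (Fintype.card_fin n)
  obtain ⟨a, ha⟩ := hn
  exact ⟨(n - c) / 2, by omega⟩

lemma pairing_of_even {α : Type*} [DecidableEq α] :
    ∀ (m : ℕ) (s : Finset α), s.card = m → Even m →
      ∃ f : α → α, ∀ x ∈ s, f x ∈ s ∧ f (f x) = x ∧ f x ≠ x := by
  intro m
  induction m using Nat.strong_induction_on with
  | _ m ih =>
    intro s hs hm
    rcases Nat.eq_zero_or_pos m with h0 | hpos
    · subst h0
      have : s = ∅ := Finset.card_eq_zero.mp hs
      subst this
      exact ⟨id, by simp⟩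
    · obtain ⟨a, ha⟩ : s.Nonempty := Finset.card_pos.mp (hs ▸ hpos)
      have h2 : 2 ≤ m := by rcases hm with ⟨t, ht⟩; omega
      have hne : (s.erase a).Nonempty := by
        rw [← Finset.card_pos, Finset.card_erase_of_mem ha, hs]; omega
      obtain ⟨b, hb⟩ := hne
      have hba : b ≠ a := Finset.ne_of_mem_erase hb
      have hbs : b ∈ s := Finset.mem_of_mem_erase hb
      set s' := (s.erase a).erase b with hs'
      have hcard : s'.card = m - 2 := by
        rw [hs', Finset.card_erase_of_mem hb, Finset.card_erase_of_mem ha, hs]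
        omega
      obtain ⟨f, hf⟩ := ih (m - 2) (by omega) s' hcard
        (by rcases hm with ⟨t, ht⟩; exact ⟨t - 1, by omega⟩)
      refine ⟨fun x => if x = a then b else if x = b then a else f x, ?_⟩
      intro x hx
      have hmem' : ∀ y, y ∈ s' → y ∈ s ∧ y ≠ a ∧ y ≠ b := by
        intro y hy
        rw [hs'] at hy
        exact ⟨Finset.mem_of_mem_erase (Finset.mem_of_mem_erase hy),
          Finset.ne_of_mem_erase (Finset.mem_of_mem_erase hy), Finset.ne_of_mem_erase hy⟩
      by_cases hxa : x = a
      · subst hxa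
        simp [hba, hbs]
      · by_cases hxb : x = b
        · subst hxb
          simp [hxa, hba, ha, Ne.symm hba]
        · have hxs' : x ∈ s' := by
            rw [hs']; exact Finset.mem_erase.mpr ⟨hxb, Finset.mem_erase.mpr ⟨hxa, hx⟩⟩
          obtain ⟨hf1, hf2, hf3⟩ := hf x hxs'
          obtain ⟨hfs, hfa, hfb⟩ := hmem' _ hf1
          simp only [if_neg hxa, if_neg hxb, if_neg hfa, if_neg hfb]
          exact ⟨hfs, hf2, hf3⟩

lemma sign_of_fpf {α : Type*} [DecidableEq α] (g : α → α) (hg : ∀ x, g (g x) = x) :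
    ∀ (m : ℕ) (s : Finset α), s.card = m → (∀ x ∈ s, g x ∈ s ∧ g x ≠ x) →
      ∃ ε : α → ℤ, ∀ x ∈ s, (ε x = 1 ∨ ε x = -1) ∧ ε (g x) = -ε x := by
  intro m
  induction m using Nat.strong_induction_on with
  | _ m ih =>
    intro s hs hcl
    rcases Nat.eq_zero_or_pos m with h0 | hpos
    · subst h0
      have : s = ∅ := Finset.card_eq_zero.mp hs
      subst this
      exact ⟨fun _ => 1, by simp⟩
    · obtain ⟨a, ha⟩ : s.Nonempty := Finset.card_pos.mp (hs ▸ hpos)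
      obtain ⟨hga, hgane⟩ := hcl a ha
      set s' := (s.erase a).erase (g a) with hs'
      have hmem' : ∀ y, y ∈ s' → y ∈ s ∧ y ≠ a ∧ y ≠ g a := by
        intro y hy
        rw [hs'] at hy
        exact ⟨Finset.mem_of_mem_erase (Finset.mem_of_mem_erase hy),
          Finset.ne_of_mem_erase (Finset.mem_of_mem_erase hy), Finset.ne_of_mem_erase hy⟩
      have hgas : g a ∈ s.erase a := Finset.mem_erase.mpr ⟨hgane, hga⟩
      have hcard : s'.card = m - 2 := by
        rw [hs', Finset.card_erase_of_mem hgas, Finset.card_erase_of_mem ha, hs]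
        omega
      have hcl' : ∀ x ∈ s', g x ∈ s' ∧ g x ≠ x := by
        intro x hx
        obtain ⟨hxs, hxa, hxga⟩ := hmem' x hx
        obtain ⟨hgxs, hgxne⟩ := hcl x hxs
        refine ⟨?_, hgxne⟩
        rw [hs']
        refine Finset.mem_erase.mpr ⟨?_, Finset.mem_erase.mpr ⟨?_, hgxs⟩⟩
        · intro h; exact hxa (by rw [← hg x, h, hg])
        · intro h; exact hxga (by rw [← hg x, h])
      obtain ⟨ε, hε⟩ := ih (m - 2) (by omega) s' hcard hcl'
      refine ⟨fun x => if x = a then 1 else if x = g a then -1 else ε x, ?_⟩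
      intro x hx
      by_cases hxa : x = a
      · subst hxa
        simp only [if_pos rfl, if_neg hgane, if_pos rfl]
        exact ⟨Or.inl rfl, rfl⟩
      · by_cases hxga : x = g a
        · subst hxga
          have hgga : g (g a) = a := hg a
          simp only [if_neg hxa, if_pos rfl, hgga, if_pos rfl]
          exact ⟨Or.inr rfl, rfl⟩
        · have hxs' : x ∈ s' := by
            rw [hs']; exact Finset.mem_erase.mpr ⟨hxga, Finset.mem_erase.mpr ⟨hxa, hx⟩⟩
          obtain ⟨hgxs', _⟩ := hcl' x hxs'
          obtain ⟨_, hgxa, hgxga⟩ := hmem' _ hgxs'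
          obtain ⟨h1, h2⟩ := hε x hxs'
          simp only [if_neg hxa, if_neg hxga, if_neg hgxa, if_neg hgxga]
          exact ⟨h1, h2⟩

end helpers

theorem stmt19 {n : ℕ} (hn : Odd n) (A : Matrix (Fin n) (Fin n) ℤ)
    (hent : ∀ i j : Fin n, A i j = -1 ∨ A i j = 0 ∨ A i j = 1)
    (hrow : ∀ i : Fin n, (∑ j : Fin n, A i j) = 1)
    (hcol : ∀ j : Fin n, (∑ i : Fin n, A i j) = 1) :
    ∃ B : Matrix (Fin n) (Fin n) ℤ,
      (∀ i j : Fin n, B i j = -1 ∨ B i j = 1) ∧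
      (∀ i : Fin n, (∑ j : Fin n, B i j) = 1) ∧
      (∀ j : Fin n, (∑ i : Fin n, B i j) = 1) ∧
      (∀ i j : Fin n, A i j ≠ 0 → B i j = A i j) := by
  classical
  have hre : ∀ i, Even (Finset.univ.filter (fun j => A i j = 0)).card :=
    fun i => evenline hn (fun j => A i j) (fun j => hent i j) (hrow i)
  have hce : ∀ j, Even (Finset.univ.filter (fun i => A i j = 0)).card :=
    fun j => evenline hn (fun i => A i j) (fun i => hent i j) (hcol j)
  choose f hf using fun i =>
    pairing_of_even _ (Finset.univ.filter (fun j => A i j = 0)) rfl (hre i)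
  choose g hg using fun j =>
    pairing_of_even _ (Finset.univ.filter (fun i => A i j = 0)) rfl (hce j)
  have hfz : ∀ i j, A i j = 0 → A i (f i j) = 0 ∧ f i (f i j) = j ∧ f i j ≠ j := by
    intro i j h
    have := hf i j (by simp [h])
    exact ⟨(Finset.mem_filter.mp this.1).2, this.2.1, this.2.2⟩
  have hgz : ∀ j i, A i j = 0 → A (g j i) j = 0 ∧ g j (g j i) = i ∧ g j i ≠ i := by
    intro j i h
    have := hg j i (by simp [h])
    exact ⟨(Finset.mem_filter.mp this.1).2, this.2.1, this.2.2⟩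
  let Z := {p : Fin n × Fin n // A p.1 p.2 = 0}
  let ρ : Z → Z := fun z => ⟨(z.1.1, f z.1.1 z.1.2), (hfz z.1.1 z.1.2 z.2).1⟩
  let σ : Z → Z := fun z => ⟨(g z.1.2 z.1.1, z.1.2), (hgz z.1.2 z.1.1 z.2).1⟩
  have hρ : Function.Involutive ρ := by
    intro z
    apply Subtype.ext
    exact Prod.ext rfl (hfz z.1.1 z.1.2 z.2).2.1
  have hσ : Function.Involutive σ := by
    intro z
    apply Subtype.ext
    exact Prod.ext (hgz z.1.2 z.1.1 z.2).2.1 rfl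
  have hρf : ∀ z : Z, ρ z ≠ z := by
    intro z h
    exact (hfz z.1.1 z.1.2 z.2).2.2 (congrArg (fun w => w.1.2) h)
  have hσf : ∀ z : Z, σ z ≠ z := by
    intro z h
    exact (hgz z.1.2 z.1.1 z.2).2.2 (congrArg (fun w => w.1.1) h)
  let ρp : Equiv.Perm Z := Function.Involutive.toPerm ρ hρ
  let σp : Equiv.Perm Z := Function.Involutive.toPerm σ hσ
  have hρp : ∀ z, ρp z = ρ z := fun z => rfl
  have hσp : ∀ z, σp z = σ z := fun z => rfl
  have hρ2 : ρp * ρp = 1 := Equiv.ext fun z => hρ z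
  have hσ2 : σp * σp = 1 := Equiv.ext fun z => hσ z
  have hρinv : ρp⁻¹ = ρp := inv_eq_of_mul_eq_one_right hρ2
  have hσinv : σp⁻¹ = σp := inv_eq_of_mul_eq_one_right hσ2
  set τ : Equiv.Perm Z := σp * ρp with hτ
  have hτinv : τ⁻¹ = ρp * σp := by rw [hτ, mul_inv_rev, hρinv, hσinv]
  have hconj : ρp * τ * ρp = τ⁻¹ := by
    rw [hτinv, hτ]
    calc ρp * (σp * ρp) * ρp = ρp * σp * (ρp * ρp) := by group
    _ = ρp * σp := by rw [hρ2, mul_one]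
  have hconjk : ∀ k : ℤ, ρp * τ ^ k * ρp = τ ^ (-k) := by
    intro k
    have h := @conj_zpow (Equiv.Perm Z) _ k ρp τ
    rw [hρinv] at h
    rw [← h, hconj, inv_zpow, ← zpow_neg]
  have hros : ∀ (k : ℤ) (z : Z), ρ ((τ ^ k) z) = (τ ^ (-k)) (ρ z) := by
    intro k z
    have h1 : (ρp * τ ^ k * ρp) (ρ z) = (τ ^ (-k)) (ρ z) := by rw [hconjk]
    have h2 : ρp (ρ z) = z := hρ z
    calc ρ ((τ ^ k) z) = ρp ((τ ^ k) (ρp (ρ z))) := by rw [h2]; rfl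
    _ = (ρp * τ ^ k * ρp) (ρ z) := rfl
    _ = (τ ^ (-k)) (ρ z) := h1
  -- key: ρ z is never in the τ-orbit of z
  have hnotsame : ∀ (z : Z) (k : ℤ), (τ ^ k) z ≠ ρ z := by
    intro z k hk
    have hρj : ∀ j : ℤ, ρ ((τ ^ j) z) = (τ ^ (k - j)) z := by
      intro j
      rw [hros j z, ← hk, ← Equiv.Perm.mul_apply, ← zpow_add]
      congr 1
      ring
    have h1 : ∀ j : ℤ, (τ ^ (k - 2 * j)) z ≠ z := by
      intro j hj
      apply hρf ((τ ^ j) z)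
      rw [hρj j]
      have : (τ ^ (k - j)) z = (τ ^ j) ((τ ^ (k - 2 * j)) z) := by
        rw [← Equiv.Perm.mul_apply, ← zpow_add]
        congr 1
        ring
      rw [this, hj]
    have h2 : ∀ j : ℤ, (τ ^ (k + 1 - 2 * j)) z ≠ z := by
      intro j hj
      apply hσf ((τ ^ j) z)
      have e1 : ∀ w : Z, τ (ρ w) = σ w := by
        intro w
        rw [hτ, Equiv.Perm.mul_apply]
        rw [hρp, hρ w, hσp]
      have hσj : σ ((τ ^ j) z) = (τ ^ (k + 1 - j)) z := by
        rw [← e1 ((τ ^ j) z), hρj j, ← Equiv.Perm.mul_apply]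
        have h2 : τ * τ ^ (k - j) = τ ^ (k + 1 - j) := by
          rw [← zpow_one_add]
          congr 1
          ring
        rw [h2]
      rw [hσj]
      have : (τ ^ (k + 1 - j)) z = (τ ^ j) ((τ ^ (k + 1 - 2 * j)) z) := by
        rw [← Equiv.Perm.mul_apply, ← zpow_add]
        congr 1
        ring
      rw [this, hj]
    rcases Int.even_or_odd k with ⟨t, ht⟩ | ⟨t, ht⟩
    · apply h1 t
      have : k - 2 * t = 0 := by omega
      rw [this]
      simp
    · apply h2 (t + 1)
      have : k + 1 - 2 * (t + 1) = 0 := by omega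
      rw [this]
      simp
  -- setoid of τ-orbits
  let r : Z → Z → Prop := fun z w => ∃ k : ℤ, (τ ^ k) z = w
  have hrefl : ∀ z, r z z := fun z => ⟨0, by simp⟩
  have hsymm : ∀ {z w}, r z w → r w z := by
    rintro z w ⟨k, hk⟩
    refine ⟨-k, ?_⟩
    rw [← hk, ← Equiv.Perm.mul_apply, ← zpow_add]
    simp
  have htrans : ∀ {z w u}, r z w → r w u → r z u := by
    rintro z w u ⟨k, hk⟩ ⟨l, hl⟩
    refine ⟨l + k, ?_⟩
    rw [← hl, ← hk, ← Equiv.Perm.mul_apply, ← zpow_add]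
  let st : Setoid Z := ⟨r, ⟨hrefl, hsymm, htrans⟩⟩
  let Q := Quotient st
  have hresp : ∀ z w, r z w → r (ρ z) (ρ w) := by
    rintro z w ⟨k, hk⟩
    refine ⟨-k, ?_⟩
    rw [← hros k z, hk]
  let gbar : Q → Q := Quotient.map ρ hresp
  have hgbar_mk : ∀ z : Z, gbar (Quotient.mk st z) = Quotient.mk st (ρ z) := fun z => rfl
  have hgbar2 : ∀ q : Q, gbar (gbar q) = q := by
    intro q
    induction q using Quotient.inductionOn with
    | _ z => rw [hgbar_mk, hgbar_mk, hρ z]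
  have hgbarf : ∀ q : Q, gbar q ≠ q := by
    intro q
    induction q using Quotient.inductionOn with
    | _ z =>
      rw [hgbar_mk]
      intro h
      obtain ⟨k, hk⟩ := hsymm (Quotient.exact h)
      exact hnotsame z k hk
  obtain ⟨εQ, hεQ⟩ := sign_of_fpf gbar hgbar2 (Finset.univ.card) Finset.univ rfl
    (fun q _ => ⟨Finset.mem_univ _, hgbarf q⟩)
  let ε : Z → ℤ := fun z => εQ (Quotient.mk st z)
  have hε1 : ∀ z, ε z = 1 ∨ ε z = -1 := fun z => (hεQ _ (Finset.mem_univ _)).1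
  have hερ : ∀ z, ε (ρ z) = -ε z := by
    intro z
    have := (hεQ (Quotient.mk st z) (Finset.mem_univ _)).2
    rw [hgbar_mk] at this
    exact this
  have hεσ : ∀ z, ε (σ z) = -ε z := by
    intro z
    have hq : (Quotient.mk st (σ z)) = Quotient.mk st (ρ z) := by
      apply Quotient.sound
      show r (σ z) (ρ z)
      apply hsymm
      refine ⟨1, ?_⟩
      show (τ ^ (1:ℤ)) (ρ z) = σ z
      rw [zpow_one, hτ]
      show σp (ρp (ρ z)) = σ z
      rw [hρp, hρ z, hσp]
    show εQ _ = -ε z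
    rw [hq]
    exact hερ z
  -- construct B
  let E : Fin n → Fin n → ℤ := fun i j => if h : A i j = 0 then ε ⟨(i, j), h⟩ else 0
  refine ⟨fun i j => A i j + E i j, ?_, ?_, ?_, ?_⟩
  · intro i j
    by_cases h : A i j = 0
    · simp only [E, dif_pos h, h, zero_add]
      rcases hε1 ⟨(i, j), h⟩ with h1 | h1
      · exact Or.inr h1
      · exact Or.inl h1
    · simp only [E, dif_neg h, add_zero]
      rcases hent i j with h1 | h1 | h1
      · exact Or.inl h1
      · exact absurd h1 h
      · exact Or.inr h1
  · intro i
    have hsum : (∑ j, E i j) = 0 := by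
      rw [← Finset.sum_subset (Finset.subset_univ (Finset.univ.filter (fun j => A i j = 0)))
        (by intro x _ hx
            simp only [Finset.mem_filter, Finset.mem_univ, true_and] at hx
            simp [E, hx])]
      apply Finset.sum_involution (g := fun a _ => f i a)
      · intro a ha
        have h0 : A i a = 0 := (Finset.mem_filter.mp ha).2
        have h0' : A i (f i a) = 0 := (hfz i a h0).1
        have : E i (f i a) = ε (ρ ⟨(i, a), h0⟩) := by
          simp only [E, dif_pos h0']
          rfl
        rw [this, hερ]
        simp only [E, dif_pos h0]
        ring
      · intro a ha _
        exact (hfz i a (Finset.mem_filter.mp ha).2).2.2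
      · intro a ha
        simp only [Finset.mem_filter, Finset.mem_univ, true_and]
        exact (hfz i a (Finset.mem_filter.mp ha).2).1
      · intro a ha
        exact (hfz i a (Finset.mem_filter.mp ha).2).2.1
    rw [Finset.sum_add_distrib, hrow i, hsum, add_zero]
  · intro j
    have hsum : (∑ i, E i j) = 0 := by
      rw [← Finset.sum_subset (Finset.subset_univ (Finset.univ.filter (fun i => A i j = 0)))
        (by intro x _ hx
            simp only [Finset.mem_filter, Finset.mem_univ, true_and] at hx
            simp [E, hx])]
      apply Finset.sum_involution (g := fun a _ => g j a)
      · intro a ha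
        have h0 : A a j = 0 := (Finset.mem_filter.mp ha).2
        have h0' : A (g j a) j = 0 := (hgz j a h0).1
        have : E (g j a) j = ε (σ ⟨(a, j), h0⟩) := by
          simp only [E, dif_pos h0']
          rfl
        rw [this, hεσ]
        simp only [E, dif_pos h0]
        ring
      · intro a ha _
        exact (hgz j a (Finset.mem_filter.mp ha).2).2.2
      · intro a ha
        simp only [Finset.mem_filter, Finset.mem_univ, true_and]
        exact (hgz j a (Finset.mem_filter.mp ha).2).1
      · intro a ha
        exact (hgz j a (Finset.mem_filter.mp ha).2).2.1
    rw [Finset.sum_add_distrib, hcol j, hsum, add_zero]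
  · intro i j h
    simp [E, h]
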